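/- Let Q = ([0,1],&,1) with & a continuous t-norm, A a D(Q)-category, and φ the weight generated by a forward Cauchy net {x_λ} in A. Then an element a ∈ A₀ is a supremum of φ if and only if a is a Yoneda limit of {x_λ}. -/
import Mathlib


noncomputable def tres (f : ℝ → ℝ → ℝ) (x y : ℝ) : ℝ :=
  sSup {z | z ∈ Set.Icc (0:ℝ) 1 ∧ f x z ≤ y}

def IsContTNorm (f : ℝ → ℝ → ℝ) : Prop :=
  (∀ a ∈ Set.Icc (0:ℝ) 1, ∀ b ∈ Set.Icc (0:ℝ) 1, f a b ∈ Set.Icc (0:ℝ) 1) ∧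
  ContinuousOn (fun p : ℝ × ℝ => f p.1 p.2) (Set.Icc 0 1 ×ˢ Set.Icc 0 1) ∧
  (∀ a ∈ Set.Icc (0:ℝ) 1, ∀ b ∈ Set.Icc (0:ℝ) 1, f a b = f b a) ∧
  (∀ a ∈ Set.Icc (0:ℝ) 1, ∀ b ∈ Set.Icc (0:ℝ) 1, ∀ c ∈ Set.Icc (0:ℝ) 1,
    f (f a b) c = f a (f b c)) ∧
  (∀ a ∈ Set.Icc (0:ℝ) 1, ∀ b ∈ Set.Icc (0:ℝ) 1, ∀ c ∈ Set.Icc (0:ℝ) 1,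
    a ≤ b → f a c ≤ f b c) ∧
  (∀ a ∈ Set.Icc (0:ℝ) 1, f a 1 = a)

/-- A D(Q)-category (ordered fuzzy set) valued in `([0,1], f, 1)`. -/
def IsDCat {α : Type*} (f : ℝ → ℝ → ℝ) (A : α → α → ℝ) : Prop :=
  (∀ x y, A x y ∈ Set.Icc (0:ℝ) 1) ∧
  (∀ x y, A x y ≤ min (A x x) (A y y)) ∧
  (∀ x y z, f (tres f (A y y) (A y z)) (A x y) ≤ A x z)

/-- A net is forward Cauchy if `lim_{ν ≥ μ} A(x_μ, x_ν)` exists. -/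
def FwdCauchy {α : Type*} {Λ : Type*} [Preorder Λ] (A : α → α → ℝ) (x : Λ → α) : Prop :=
  ∃ L : ℝ, Filter.Tendsto (fun q : Λ × Λ => A (x q.1) (x q.2))
    (Filter.atTop ⊓ Filter.principal {q : Λ × Λ | q.1 ≤ q.2}) (nhds L)

/-- A net is biCauchy if `lim_{μ,ν} A(x_μ, x_ν)` exists. -/
def BiCauchy {α : Type*} {Λ : Type*} [Preorder Λ] (A : α → α → ℝ) (x : Λ → α) : Prop :=
  ∃ L : ℝ, Filter.Tendsto (fun q : Λ × Λ => A (x q.1) (x q.2)) Filter.atTop (nhds L)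

/-- The type `⋁_λ ⋀_{μ ≥ λ} A(x_μ, x_μ)` of a net. -/
noncomputable def genType {α : Type*} {Λ : Type*} [Preorder Λ]
    (A : α → α → ℝ) (x : Λ → α) : ℝ :=
  ⨆ l : Λ, ⨅ σ : {σ : Λ // l ≤ σ}, A (x σ.1) (x σ.1)

/-- The weight `⋁_λ ⋀_{μ ≥ λ} A(−, x_μ)` generated by a net. -/
noncomputable def genWeight {α : Type*} {Λ : Type*} [Preorder Λ]
    (A : α → α → ℝ) (x : Λ → α) : α → ℝ :=
  fun u => ⨆ l : Λ, ⨅ σ : {σ : Λ // l ≤ σ}, A u (x σ.1)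

/-- The coweight `⋁_λ ⋀_{μ ≥ λ} A(x_μ, −)` generated by a net. -/
noncomputable def genCoweight {α : Type*} {Λ : Type*} [Preorder Λ]
    (A : α → α → ℝ) (x : Λ → α) : α → ℝ :=
  fun v => ⨆ l : Λ, ⨅ σ : {σ : Λ // l ≤ σ}, A (x σ.1) v

/-- `s` is a Yoneda limit of the net `x`. -/
noncomputable def YonedaLim {α : Type*} {Λ : Type*} [Preorder Λ]
    (A : α → α → ℝ) (x : Λ → α) (s : α) : Prop :=
  A s s = genType A x ∧ ∀ y, A s y = genCoweight A x y

/-- `s` is a supremum of a weight `φ` of type `tφ`: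
`A(s,−) = PA(φ, y(−)) = A(y,y) ∧ ⋀_u (φ(u) → A(u,y)) & tφ`. -/
noncomputable def IsSupremum {α : Type*} (f : ℝ → ℝ → ℝ) (A : α → α → ℝ)
    (tφ : ℝ) (φ : α → ℝ) (s : α) : Prop :=
  A s s = tφ ∧ ∀ y, A s y = min (A y y) (⨅ u : α, f (tres f (φ u) (A u y)) tφ)

open Filter Set Topology

section TNorm
variable {f : ℝ → ℝ → ℝ} (ht : IsContTNorm f)
include ht

local notation "I01" => Set.Icc (0:ℝ) 1

lemma httt_mem {a b : ℝ} (ha : a ∈ I01) (hb : b ∈ I01) : f a b ∈ I01 := ht.1 a ha b hb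

lemma httt_comm {a b : ℝ} (ha : a ∈ I01) (hb : b ∈ I01) : f a b = f b a := ht.2.2.1 a ha b hb

lemma httt_unit {a : ℝ} (ha : a ∈ I01) : f a 1 = a := ht.2.2.2.2.2 a ha

lemma httt_mono1 {a b c : ℝ} (ha : a ∈ I01) (hb : b ∈ I01) (hc : c ∈ I01) (h : a ≤ b) :
    f a c ≤ f b c := ht.2.2.2.2.1 a ha b hb c hc h

lemma httt_mono2 {a b c : ℝ} (ha : a ∈ I01) (hb : b ∈ I01) (hc : c ∈ I01) (h : a ≤ b) :
    f c a ≤ f c b := by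
  rw [httt_comm ht hc ha, httt_comm ht hc hb]; exact httt_mono1 ht ha hb hc h

lemma httt_zero {a : ℝ} (ha : a ∈ I01) : f a 0 = 0 := by
  have h01 : (0:ℝ) ∈ I01 := ⟨le_rfl, zero_le_one⟩
  have h11 : (1:ℝ) ∈ I01 := ⟨zero_le_one, le_rfl⟩
  have h1 : f a 0 ≤ f 1 0 := httt_mono1 ht ha h11 h01 ha.2
  have h2 : f 1 0 = 0 := by rw [httt_comm ht h11 h01, httt_unit ht h01]
  exact le_antisymm (h1.trans h2.le) (httt_mem ht ha h01).1

lemma httt_cont1 {a : ℝ} (ha : a ∈ I01) : ContinuousOn (fun z => f a z) I01 := by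
  have : ContinuousOn (fun z : ℝ => ((a, z) : ℝ × ℝ)) I01 :=
    (continuous_const.prodMk continuous_id).continuousOn
  exact ht.2.1.comp this (fun z hz => ⟨ha, hz⟩)

omit ht in lemma tres_set_eq (a c : ℝ) :
    {z | z ∈ I01 ∧ f a z ≤ c} = I01 ∩ (fun z => f a z) ⁻¹' (Iic c) := by
  ext z; simp [Set.mem_setOf_eq, Set.mem_inter_iff]

lemma tres_set_nonempty {a c : ℝ} (ha : a ∈ I01) (hc0 : 0 ≤ c) :
    {z | z ∈ I01 ∧ f a z ≤ c}.Nonempty :=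
  ⟨0, ⟨le_rfl, zero_le_one⟩, by rw [httt_zero ht ha]; exact hc0⟩

omit ht in lemma tres_set_bdd (a c : ℝ) : BddAbove {z | z ∈ I01 ∧ f a z ≤ c} :=
  ⟨1, fun z hz => hz.1.2⟩

lemma tres_mem_spec {a c : ℝ} (ha : a ∈ I01) (hc0 : 0 ≤ c) :
    tres f a c ∈ I01 ∧ f a (tres f a c) ≤ c := by
  have hcl : IsClosed {z | z ∈ I01 ∧ f a z ≤ c} := by
    rw [tres_set_eq]
    exact (httt_cont1 ht ha).preimage_isClosed_of_isClosed isClosed_Icc isClosed_Iic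
  exact hcl.csSup_mem (tres_set_nonempty ht ha hc0) (tres_set_bdd a c)

lemma tres_mem {a c : ℝ} (ha : a ∈ I01) (hc0 : 0 ≤ c) : tres f a c ∈ I01 :=
  (tres_mem_spec ht ha hc0).1

lemma tres_spec {a c : ℝ} (ha : a ∈ I01) (hc0 : 0 ≤ c) : f a (tres f a c) ≤ c :=
  (tres_mem_spec ht ha hc0).2

lemma le_tres {a c z : ℝ} (hz : z ∈ I01) (h : f a z ≤ c) : z ≤ tres f a c :=
  le_csSup (tres_set_bdd a c) ⟨hz, h⟩

lemma tres_div {a c : ℝ} (ha : a ∈ I01) (hc : c ∈ I01) :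
    f a (tres f a c) = min a c := by
  have hw := tres_mem ht ha hc.1
  refine le_antisymm (le_min ?_ (tres_spec ht ha hc.1)) ?_
  · have := httt_mono2 ht hw ⟨zero_le_one, le_rfl⟩ ha hw.2
    rwa [httt_unit ht ha] at this
  · rcases le_total a c with h | h
    · have h1 : (1:ℝ) ≤ tres f a c := le_tres ht ⟨zero_le_one, le_rfl⟩ (by rw [httt_unit ht ha]; exact h)
      have : f a 1 ≤ f a (tres f a c) := httt_mono2 ht ⟨zero_le_one, le_rfl⟩ hw ha h1
      rw [httt_unit ht ha] at this
      exact (min_le_left a c).trans this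
    · -- c ≤ a : IVT
      have hiv := intermediate_value_Icc (zero_le_one) (httt_cont1 ht ha)
      have : c ∈ Icc (f a 0) (f a 1) := by
        rw [httt_zero ht ha, httt_unit ht ha]; exact ⟨hc.1, h⟩
      obtain ⟨z₀, hz₀I, hz₀⟩ := hiv this
      have hz₀le : z₀ ≤ tres f a c := le_tres ht hz₀I (le_of_eq hz₀)
      have : f a z₀ ≤ f a (tres f a c) := httt_mono2 ht hz₀I hw ha hz₀le
      simp only at hz₀
      rw [hz₀] at this
      exact (min_le_right a c).trans this

lemma lemD {L a s t : ℝ} (hL : L ∈ I01) (ha : a ∈ I01) (haL : a ≤ L)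
    (hs : s ∈ I01) (htt : t ∈ I01) (heq : f L s = f L t) : f a s = f a t := by
  set e := tres f L a with he
  have heI : e ∈ I01 := tres_mem ht hL ha.1
  have hLe : f L e = a := by rw [tres_div ht hL ha]; exact min_eq_right haL
  calc f a s = f (f L e) s := by rw [hLe]
    _ = f (f e L) s := by rw [httt_comm ht hL heI]
    _ = f e (f L s) := ht.2.2.2.1 e heI L hL s hs
    _ = f e (f L t) := by rw [heq]
    _ = f (f e L) t := (ht.2.2.2.1 e heI L hL t htt).symm
    _ = f (f L e) t := by rw [httt_comm ht heI hL]
    _ = f a t := by rw [hLe]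

lemma tendsto_f2 {β : Type*} {F : Filter β} {p q : β → ℝ} {a c : ℝ}
    (hp : Tendsto p F (𝓝 a)) (hq : Tendsto q F (𝓝 c))
    (hpI : ∀ b, p b ∈ I01) (hqI : ∀ b, q b ∈ I01) (haI : a ∈ I01) (hcI : c ∈ I01) :
    Tendsto (fun b => f (p b) (q b)) F (𝓝 (f a c)) := by
  have h1 : Tendsto (fun b => ((p b, q b) : ℝ × ℝ)) F (𝓝[I01 ×ˢ I01] (a, c)) :=
    tendsto_nhdsWithin_iff.2 ⟨hp.prodMk_nhds hq, Eventually.of_forall fun b => ⟨hpI b, hqI b⟩⟩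
  exact (ht.2.1 (a, c) ⟨haI, hcI⟩).tendsto.comp h1

end TNorm

section SupInf

open Filter Set Topology

local notation "I01" => Set.Icc (0:ℝ) 1

variable {Λ : Type*} [Nonempty Λ] [SemilatticeSup Λ]

instance tail_nonempty {Λ : Type*} [Preorder Λ] (l : Λ) : Nonempty {σ : Λ // l ≤ σ} :=
  ⟨⟨l, le_rfl⟩⟩

/-- `⋁_λ ⋀_{μ ≥ λ} g μ`. -/
noncomputable def supInf (g : Λ → ℝ) : ℝ :=
  ⨆ l : Λ, ⨅ σ : {σ : Λ // l ≤ σ}, g σ.1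

variable {g : Λ → ℝ} (hg : ∀ μ, g μ ∈ I01)
include hg

lemma tail_bddBelow (l : Λ) : BddBelow (Set.range fun σ : {σ : Λ // l ≤ σ} => g σ.1) := by
  refine ⟨0, ?_⟩; rintro _ ⟨σ, rfl⟩; exact (hg σ.1).1

lemma tail_mem (l : Λ) : (⨅ σ : {σ : Λ // l ≤ σ}, g σ.1) ∈ I01 :=
  ⟨le_ciInf fun σ => (hg σ.1).1, (ciInf_le (tail_bddBelow hg l) ⟨l, le_rfl⟩).trans (hg l).2⟩

lemma supInf_bddAbove : BddAbove (Set.range fun l : Λ => ⨅ σ : {σ : Λ // l ≤ σ}, g σ.1) := by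
  refine ⟨1, ?_⟩; rintro _ ⟨l, rfl⟩; exact (tail_mem hg l).2

lemma supInf_mem : supInf g ∈ I01 :=
  ⟨le_trans (tail_mem hg Classical.ofNonempty).1 (le_ciSup (supInf_bddAbove hg) _),
   ciSup_le fun l => (tail_mem hg l).2⟩

lemma supInf_le_of_le {c : ℝ} (h : ∀ μ, g μ ≤ c) : supInf g ≤ c :=
  ciSup_le fun l => (ciInf_le (tail_bddBelow hg l) ⟨l, le_rfl⟩).trans (h l)

lemma supInf_mono {h : Λ → ℝ} (hh : ∀ μ, h μ ∈ I01) (hle : ∀ μ, g μ ≤ h μ) :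
    supInf g ≤ supInf h := by
  refine ciSup_le fun l => le_trans ?_ (le_ciSup (supInf_bddAbove hh) l)
  exact le_ciInf fun σ => (ciInf_le (tail_bddBelow hg l) σ).trans (hle σ.1)

lemma supInf_event_ge {ε : ℝ} (hε : 0 < ε) : ∃ l : Λ, ∀ μ, l ≤ μ → supInf g - ε ≤ g μ := by
  have h1 : supInf g - ε < supInf g := by linarith
  obtain ⟨l, hl⟩ := exists_lt_of_lt_ciSup h1
  exact ⟨l, fun μ hμ => (hl.le).trans (ciInf_le (tail_bddBelow hg l) ⟨μ, hμ⟩)⟩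

lemma supInf_freq_le {ε : ℝ} (hε : 0 < ε) (l : Λ) : ∃ μ, l ≤ μ ∧ g μ < supInf g + ε := by
  have h0 : (⨅ σ : {σ : Λ // l ≤ σ}, g σ.1) ≤ supInf g := le_ciSup (supInf_bddAbove hg) l
  have h1 : (⨅ σ : {σ : Λ // l ≤ σ}, g σ.1) < supInf g + ε := by linarith
  obtain ⟨σ, hσ⟩ := exists_lt_of_ciInf_lt h1
  exact ⟨σ.1, σ.2, hσ⟩

lemma supInf_eq_of_tendsto {L : ℝ} (hL : Tendsto g atTop (𝓝 L)) : supInf g = L := by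
  refine le_antisymm ?_ ?_
  · refine le_of_forall_pos_le_add fun ε hε => ?_
    obtain ⟨N, hN⟩ := (Metric.tendsto_atTop.1 hL) ε hε
    refine ciSup_le fun l => ?_
    have : g (l ⊔ N) < L + ε := by
      have := hN (l ⊔ N) le_sup_right
      rw [Real.dist_eq, abs_sub_lt_iff] at this
      linarith [this.1]
    exact (ciInf_le (tail_bddBelow hg l) ⟨l ⊔ N, le_sup_left⟩).trans this.le
  · refine le_of_forall_pos_le_add fun ε hε => ?_
    obtain ⟨N, hN⟩ := (Metric.tendsto_atTop.1 hL) ε hε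
    have : L - ε ≤ ⨅ σ : {σ : Λ // N ≤ σ}, g σ.1 := by
      refine le_ciInf fun σ => ?_
      have := hN σ.1 σ.2
      rw [Real.dist_eq, abs_sub_lt_iff] at this
      linarith [this.2]
    have h2 : L - ε ≤ supInf g := this.trans (le_ciSup (supInf_bddAbove hg) N)
    linarith

lemma supInf_le_ultrafilter_lim {𝒰 : Ultrafilter Λ} (hU : ↑𝒰 ≤ (atTop : Filter Λ)) {c : ℝ}
    (hlim : Tendsto g 𝒰 (𝓝 c)) : supInf g ≤ c := by
  refine le_of_forall_pos_le_add fun ε hε => ?_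
  obtain ⟨l, hl⟩ := supInf_event_ge hg hε
  have hev : ∀ᶠ μ in (𝒰 : Filter Λ), supInf g - ε ≤ g μ :=
    hU (eventually_atTop.2 ⟨l, hl⟩)
  have h2 : supInf g - ε ≤ c := ge_of_tendsto hlim hev
  linarith

lemma exists_ultrafilter_tendsto_supInf :
    ∃ 𝒰 : Ultrafilter Λ, ↑𝒰 ≤ (atTop : Filter Λ) ∧ Tendsto g 𝒰 (𝓝 (supInf g)) := by
  set b := supInf g with hb
  have hF : (atTop ⊓ comap g (𝓝 b)).NeBot := by
    rw [((atTop_basis).inf (Metric.nhds_basis_ball.comap g)).neBot_iff]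
    rintro ⟨l, ε⟩ ⟨-, hε⟩
    obtain ⟨l₁, hl₁⟩ := supInf_event_ge hg (half_pos hε)
    obtain ⟨μ, hμ₁, hμ₂⟩ := supInf_freq_le hg (half_pos hε) (l ⊔ l₁)
    refine ⟨μ, le_sup_left.trans hμ₁, ?_⟩
    simp only [Set.mem_preimage, Metric.mem_ball, Real.dist_eq, abs_sub_lt_iff]
    have := hl₁ μ (le_sup_right.trans hμ₁)
    constructor <;> linarith
  refine ⟨Ultrafilter.of (atTop ⊓ comap g (𝓝 b)), ?_, ?_⟩
  · exact (Ultrafilter.of_le _).trans inf_le_left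
  · have := (Ultrafilter.of_le (atTop ⊓ comap g (𝓝 b))).trans inf_le_right
    exact tendsto_iff_comap.2 this

omit hg in
lemma ultrafilter_lim_exists (𝒰 : Ultrafilter Λ) (hgI : ∀ μ, g μ ∈ I01) :
    ∃ c ∈ I01, Tendsto g 𝒰 (𝓝 c) := by
  have hle : (𝒰.map g : Filter ℝ) ≤ Filter.principal I01 := by
    rw [Ultrafilter.coe_map]
    exact le_principal_iff.2 (mem_map.2 (univ_mem' hgI))
  obtain ⟨c, hcI, hc⟩ := isCompact_Icc.ultrafilter_le_nhds (𝒰.map g) hle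
  exact ⟨c, hcI, hc⟩

end SupInf

section Main

open Filter Set Topology

local notation "I01" => Set.Icc (0:ℝ) 1

variable {f : ℝ → ℝ → ℝ} {α : Type*} {Λ : Type*} [Nonempty Λ] [SemilatticeSup Λ]

lemma cauchy_eps {A : α → α → ℝ} {x : Λ → α} {L : ℝ}
    (hLt : Tendsto (fun q : Λ × Λ => A (x q.1) (x q.2))
      (atTop ⊓ 𝓟 {q : Λ × Λ | q.1 ≤ q.2}) (𝓝 L)) {ε : ℝ} (hε : 0 < ε) :
    ∃ l₀ : Λ, ∀ μ ν : Λ, l₀ ≤ μ → μ ≤ ν → |A (x μ) (x ν) - L| < ε := by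
  have h1 : ∀ᶠ q : Λ × Λ in atTop ⊓ 𝓟 {q : Λ × Λ | q.1 ≤ q.2},
      dist (A (x q.1) (x q.2)) L < ε := hLt (Metric.ball_mem_nhds L hε)
  rw [eventually_inf_principal] at h1
  rw [eventually_atTop] at h1
  obtain ⟨a, ha⟩ := h1
  refine ⟨a.1 ⊔ a.2, fun μ ν hμ hν => ?_⟩
  have := ha (μ, ν) ⟨le_sup_left.trans hμ, le_sup_right.trans (hμ.trans hν)⟩ hν
  rwa [Real.dist_eq] at this

lemma diag_tendsto {A : α → α → ℝ} {x : Λ → α} {L : ℝ}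
    (hLt : Tendsto (fun q : Λ × Λ => A (x q.1) (x q.2))
      (atTop ⊓ 𝓟 {q : Λ × Λ | q.1 ≤ q.2}) (𝓝 L)) :
    Tendsto (fun μ => A (x μ) (x μ)) atTop (𝓝 L) := by
  have h1 : Tendsto (fun μ : Λ => ((μ, μ) : Λ × Λ)) atTop
      (atTop ⊓ 𝓟 {q : Λ × Λ | q.1 ≤ q.2}) := by
    refine tendsto_inf.2 ⟨?_, tendsto_principal.2 (Eventually.of_forall fun μ => le_rfl)⟩
    rw [← prod_atTop_atTop_eq]
    exact tendsto_id.prodMk tendsto_id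
  exact hLt.comp h1

lemma genWeight_eq (A : α → α → ℝ) (x : Λ → α) (u : α) :
    genWeight A x u = supInf (fun μ => A u (x μ)) := rfl

lemma genCoweight_eq (A : α → α → ℝ) (x : Λ → α) (v : α) :
    genCoweight A x v = supInf (fun μ => A (x μ) v) := rfl

lemma genType_eq (A : α → α → ℝ) (x : Λ → α) :
    genType A x = supInf (fun μ => A (x μ) (x μ)) := rfl

lemma phi_tendsto {A : α → α → ℝ} {x : Λ → α} (hAI : ∀ u v, A u v ∈ I01) {L : ℝ}
    (hLt : Tendsto (fun q : Λ × Λ => A (x q.1) (x q.2))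
      (atTop ⊓ 𝓟 {q : Λ × Λ | q.1 ≤ q.2}) (𝓝 L)) :
    Tendsto (fun μ => genWeight A x (x μ)) atTop (𝓝 L) := by
  rw [Metric.tendsto_atTop]
  intro ε hε
  obtain ⟨l₀, hl₀⟩ := cauchy_eps hLt (half_pos hε)
  refine ⟨l₀, fun μ hμ => ?_⟩
  have hgI : ∀ ν, A (x μ) (x ν) ∈ I01 := fun ν => hAI _ _
  have hup : genWeight A x (x μ) ≤ L + ε / 2 := by
    rw [genWeight_eq]
    refine ciSup_le fun l => ?_
    have h1 : |A (x μ) (x (l ⊔ μ)) - L| < ε / 2 := hl₀ μ (l ⊔ μ) hμ le_sup_right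
    rw [abs_sub_lt_iff] at h1
    exact (ciInf_le (tail_bddBelow hgI l) ⟨l ⊔ μ, le_sup_left⟩).trans (by linarith [h1.1])
  have hlow : L - ε / 2 ≤ genWeight A x (x μ) := by
    rw [genWeight_eq]
    refine le_trans ?_ (le_ciSup (supInf_bddAbove hgI) μ)
    refine le_ciInf fun σ => ?_
    have h1 : |A (x μ) (x σ.1) - L| < ε / 2 := hl₀ μ σ.1 hμ σ.2
    rw [abs_sub_lt_iff] at h1
    linarith [h1.2]
  rw [Real.dist_eq, abs_sub_lt_iff]
  constructor <;> linarith

variable (ht : IsContTNorm f)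
include ht

/-- Key lemma: the presheaf hom from the generated weight to `y(y)` equals the
generated coweight. -/
lemma key_lemma {A : α → α → ℝ} (hA : IsDCat f A) {x : Λ → α}
    (hfc : FwdCauchy A x) (y : α) :
    min (A y y) (⨅ u : α, f (tres f (genWeight A x u) (A u y)) (genType A x))
      = genCoweight A x y := by
  obtain ⟨L, hLt⟩ := hfc
  haveI : Nonempty α := ⟨y⟩
  have hAI : ∀ u v, A u v ∈ I01 := hA.1
  have hdiag : Tendsto (fun μ => A (x μ) (x μ)) atTop (𝓝 L) := diag_tendsto hLt
  have haI : ∀ μ, A (x μ) (x μ) ∈ I01 := fun μ => hAI _ _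
  have hLI : L ∈ I01 := isClosed_Icc.mem_of_tendsto hdiag (Eventually.of_forall haI)
  have htype : genType A x = L := by
    rw [genType_eq]; exact supInf_eq_of_tendsto haI hdiag
  have hphi : Tendsto (fun μ => genWeight A x (x μ)) atTop (𝓝 L) := phi_tendsto hAI hLt
  have hcI : ∀ μ, A (x μ) y ∈ I01 := fun μ => hAI _ _
  have hφI : ∀ u, genWeight A x u ∈ I01 := fun u => by
    rw [genWeight_eq]; exact supInf_mem (fun μ => hAI _ _)
  have hφL : ∀ u, genWeight A x u ≤ L := fun u => by
    rw [genWeight_eq, ← htype, genType_eq]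
    exact supInf_mono (fun μ => hAI _ _) haI
      (fun μ => ((hA.2.1 u (x μ)).trans (min_le_right _ _)))
  set b := genCoweight A x y with hbdef
  have hbI : b ∈ I01 := by rw [hbdef, genCoweight_eq]; exact supInf_mem hcI
  have hbL : b ≤ L := by
    rw [hbdef, genCoweight_eq, ← htype, genType_eq]
    exact supInf_mono hcI haI (fun μ => ((hA.2.1 (x μ) y).trans (min_le_left _ _)))
  have hbyy : b ≤ A y y := by
    rw [hbdef, genCoweight_eq]
    exact supInf_le_of_le hcI (fun μ => (hA.2.1 (x μ) y).trans (min_le_right _ _))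
  rw [htype]
  -- an ultrafilter along which A (x μ) y → b
  obtain ⟨𝒰, hUle, hUc⟩ := exists_ultrafilter_tendsto_supInf hcI
  rw [← genCoweight_eq A x y, ← hbdef] at hUc
  refine le_antisymm ?_ ?_
  · -- ≤ : PA(φ, y y) ≤ b
    set tt := fun μ => tres f (genWeight A x (x μ)) (A (x μ) y) with htt
    have httI : ∀ μ, tt μ ∈ I01 := fun μ => tres_mem ht (hφI (x μ)) (hcI μ).1
    obtain ⟨ts, htsI, hUt⟩ := ultrafilter_lim_exists 𝒰 httI
    have h1 : Tendsto (fun μ => f (genWeight A x (x μ)) (tt μ)) 𝒰 (𝓝 (f L ts)) :=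
      tendsto_f2 ht (hphi.mono_left hUle) hUt (fun μ => hφI (x μ)) httI hLI htsI
    have h2 : Tendsto (fun μ => f (genWeight A x (x μ)) (tt μ)) 𝒰 (𝓝 (min L b)) := by
      have heq : ∀ μ, f (genWeight A x (x μ)) (tt μ) = min (genWeight A x (x μ)) (A (x μ) y) :=
        fun μ => tres_div ht (hφI (x μ)) (hcI μ)
      simp only [heq]
      exact (hphi.mono_left hUle).min hUc
    have hft : f L ts = b := by
      rw [tendsto_nhds_unique h1 h2]; exact min_eq_right hbL
    have h3 : Tendsto (fun μ => f (tt μ) L) 𝒰 (𝓝 (f ts L)) :=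
      tendsto_f2 ht hUt tendsto_const_nhds httI (fun _ => hLI) htsI hLI
    have h4 : f ts L = b := by rw [httt_comm ht htsI hLI, hft]
    have h5 : ∀ μ, (⨅ u : α, f (tres f (genWeight A x u) (A u y)) L) ≤ f (tt μ) L := by
      intro μ
      refine ciInf_le ?_ (x μ)
      refine ⟨0, ?_⟩
      rintro _ ⟨u, rfl⟩
      exact (httt_mem ht (tres_mem ht (hφI u) (hAI u y).1) hLI).1
    calc min (A y y) (⨅ u : α, f (tres f (genWeight A x u) (A u y)) L)
        ≤ ⨅ u : α, f (tres f (genWeight A x u) (A u y)) L := min_le_right _ _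
      _ ≤ f ts L := ge_of_tendsto h3 (Eventually.of_forall h5)
      _ = b := h4
  · -- ≥ : b ≤ PA(φ, y y)
    refine le_min hbyy (le_ciInf fun u => ?_)
    set φu := genWeight A x u with hφu
    have hφuI : φu ∈ I01 := hφI u
    have hφuL : φu ≤ L := hφL u
    set w := tres f L b with hw
    have hwI : w ∈ I01 := tres_mem ht hLI hbI.1
    have hLw : f L w = b := by rw [hw, tres_div ht hLI hbI]; exact min_eq_right hbL
    set tt := fun μ => tres f (A (x μ) (x μ)) (A (x μ) y) with htt
    have httI : ∀ μ, tt μ ∈ I01 := fun μ => tres_mem ht (haI μ) (hcI μ).1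
    obtain ⟨ts, htsI, hUt⟩ := ultrafilter_lim_exists 𝒰 httI
    obtain ⟨ds, hdsI, hUd⟩ := ultrafilter_lim_exists 𝒰 (fun μ => hAI u (x μ))
    have hφud : φu ≤ ds := by
      rw [hφu, genWeight_eq]
      exact supInf_le_ultrafilter_lim (fun μ => hAI u (x μ)) hUle hUd
    have hLts : f L ts = b := by
      have h1 : Tendsto (fun μ => f (A (x μ) (x μ)) (tt μ)) 𝒰 (𝓝 (f L ts)) :=
        tendsto_f2 ht (hdiag.mono_left hUle) hUt haI httI hLI htsI
      have h2 : Tendsto (fun μ => f (A (x μ) (x μ)) (tt μ)) 𝒰 (𝓝 (min L b)) := by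
        have heq : ∀ μ, f (A (x μ) (x μ)) (tt μ) = min (A (x μ) (x μ)) (A (x μ) y) :=
          fun μ => tres_div ht (haI μ) (hcI μ)
        simp only [heq]
        exact (hdiag.mono_left hUle).min hUc
      rw [tendsto_nhds_unique h1 h2]; exact min_eq_right hbL
    have hfd : f ts ds ≤ A u y := by
      refine le_of_tendsto (tendsto_f2 ht hUt hUd httI (fun μ => hAI u (x μ)) htsI hdsI) ?_
      exact Eventually.of_forall fun μ => hA.2.2 u (x μ) y
    set t' := min ts w with ht'
    have ht'I : t' ∈ I01 := ⟨le_min htsI.1 hwI.1, (min_le_left _ _).trans htsI.2⟩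
    have hLt' : f L t' = f L w := by
      rcases min_choice ts w with h | h <;> rw [ht', h]
      rw [hLts, hLw]
    have hD : f φu t' = f φu w :=
      lemD ht hLI hφuI hφuL ht'I hwI hLt'
    have hstep : f φu w ≤ A u y := by
      rw [← hD]
      calc f φu t' ≤ f ds t' := httt_mono1 ht hφuI hdsI ht'I hφud
        _ ≤ f ds ts := httt_mono2 ht ht'I htsI hdsI (min_le_left _ _)
        _ = f ts ds := httt_comm ht hdsI htsI
        _ ≤ A u y := hfd
    have hwle : w ≤ tres f φu (A u y) := le_tres ht hwI hstep
    calc b = f L w := hLw.symm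
      _ = f w L := httt_comm ht hLI hwI
      _ ≤ f (tres f φu (A u y)) L :=
          httt_mono1 ht hwI (tres_mem ht hφuI (hAI u y).1) hLI hwle

end Main

/-- for the weight generated by a forward Cauchy net, an element is a
supremum of the weight iff it is a Yoneda limit of the net. -/
theorem stmt11 (f : ℝ → ℝ → ℝ) (ht : IsContTNorm f)
    {α : Type*} (A : α → α → ℝ) (hA : IsDCat f A)
    {Λ : Type*} [Nonempty Λ] [SemilatticeSup Λ] (x : Λ → α)
    (hfc : FwdCauchy A x) (s : α) :
    IsSupremum f A (genType A x) (genWeight A x) s ↔ YonedaLim A x s := by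
  constructor
  · rintro ⟨h1, h2⟩
    exact ⟨h1, fun y => (h2 y).trans (key_lemma ht hA hfc y)⟩
  · rintro ⟨h1, h2⟩
    exact ⟨h1, fun y => (h2 y).trans (key_lemma ht hA hfc y).symm⟩
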